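/- Let B^i ⊆ (ℕ → ℝ^{d_i}) (i = 1,…,N) be behaviors with lag at most ℓ_i, and let B^Π ⊆ (ℕ → ℝ^{d_1} × ⋯ × ℝ^{d_N}) be a behavior with lag at most ℓ_Π. Then the interconnected behavior B = {w : w^i ∈ B^i for every i} ∩ B^Π has lag at most max{ℓ_Π, ℓ_1, …, ℓ_N}. -/
import Mathlib


/-- The `L`-step restriction of a behavior: functions agreeing with some trajectory
of `B` on the first `L` steps. -/
def restrict {α : Type*} (L : ℕ) (B : Set (ℕ → α)) : Set (ℕ → α) :=
  {v | ∃ w ∈ B, ∀ k < L, v k = w k}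

/-- `B` has lag at most `ℓ`: every trajectory all of whose windows of length `ℓ+1`
are windows of `B` belongs to `B`. -/
def hasLagAtMost {α : Type*} (B : Set (ℕ → α)) (ℓ : ℕ) : Prop :=
  ∀ w : ℕ → α, (∀ k : ℕ, (fun j => w (k + j)) ∈ restrict (ℓ + 1) B) → w ∈ B

/-- the interconnected behavior
`B = {w : w^i ∈ B^i for every i} ∩ B^Π` has lag at most
`max{ℓ_Π, ℓ_1, …, ℓ_N}`. -/
theorem lag_of_interconnection {N : ℕ} (d : Fin N → ℕ)
    (Bi : ∀ i : Fin N, Set (ℕ → Fin (d i) → ℝ)) (ℓi : Fin N → ℕ)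
    (hBi : ∀ i, hasLagAtMost (Bi i) (ℓi i))
    (BPi : Set (ℕ → (i : Fin N) → Fin (d i) → ℝ)) (ℓPi : ℕ)
    (hBPi : hasLagAtMost BPi ℓPi) :
    hasLagAtMost
      ({w : ℕ → (i : Fin N) → Fin (d i) → ℝ | ∀ i : Fin N, (fun k => w k i) ∈ Bi i} ∩ BPi)
      (max ℓPi (Finset.univ.sup ℓi)) := by
  intro w hw
  constructor
  · intro i
    apply hBi i
    intro k
    obtain ⟨u, ⟨h1, h2⟩, hu⟩ := hw k
    refine ⟨fun k => u k i, h1 i, fun j hj => ?_⟩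
    have : j < ℓPi ⊔ Finset.univ.sup ℓi + 1 := by
      have := Finset.le_sup (f := ℓi) (Finset.mem_univ i)
      omega
    exact congrFun (hu j this) i
  · apply hBPi
    intro k
    obtain ⟨u, ⟨h1, h2⟩, hu⟩ := hw k
    exact ⟨u, h2, fun j hj => hu j (by omega)⟩
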